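/- Let C ⊆ F_2^n be a neural code. Then the canonical form of the polarized neural ideal equals the set of polarizations of the elements of the canonical form of J_C: CF((J_C)^p) = {f^p : f ∈ CF(J_C)}. -/

import Mathlib

open MvPolynomial

/-- The field with two elements. -/
abbrev F2 := ZMod 2

/-- A motif indexed by `ι`: at each index it is `0`, `1`, or `*` (represented by `none`). -/
abbrev Motif (ι : Type*) := ι → Option F2

/-- The partial order on motifs: `a ≤ b` iff `a i = b i` for every index `i` with `b i ≠ *`. -/
def MotifLE {ι : Type*} (a b : Motif ι) : Prop :=
  ∀ (i : ι) (x : F2), b i = some x → a i = some x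

/-- The variety of a motif: all words agreeing with the motif on its non-`*` coordinates. -/
def variety {ι : Type*} (a : Motif ι) : Set (ι → F2) :=
  {w | ∀ (i : ι) (x : F2), a i = some x → w i = x}

/-- `a` is a motif of the code `C` iff its variety is contained in `C`. -/
def IsMotifOf {ι : Type*} (C : Set (ι → F2)) (a : Motif ι) : Prop :=
  variety a ⊆ C

/-- The set of maximal motifs of a code `C`. -/
def maxMot {ι : Type*} (C : Set (ι → F2)) : Set (Motif ι) :=
  {a | IsMotifOf C a ∧ ∀ b : Motif ι, IsMotifOf C b → MotifLE a b → a = b}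

/-- Two motifs are disjoint if at some index both are non-`*` and they differ. -/
def DisjointMotifs {ι : Type*} (a b : Motif ι) : Prop :=
  ∃ (i : ι) (x : F2), a i = some x ∧ b i = some (1 - x)

/-- Polarization of a motif of length `n`, as a motif of length `2n`
(indexed by `Fin n ⊕ Fin n`; `Sum.inl i` is coordinate `i`, `Sum.inr i` is coordinate `n+i`). -/
def polMotif {n : ℕ} (a : Motif (Fin n)) : Motif (Fin n ⊕ Fin n)
  | Sum.inl i => if a i = some 0 then some 0 else none
  | Sum.inr i => if a i = some 1 then some 0 else none

/-- The bar of a motif: `0 ↦ 1`, `1 ↦ 0`, `* ↦ *`. -/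
def barMotif {ι : Type*} (a : Motif ι) : Motif ι :=
  fun i => (a i).map (fun x => 1 - x)

/-- The polarization of a code `C ⊆ F₂ⁿ`: the union of the varieties of the
polarizations of the maximal motifs of `C`. -/
def polCode {n : ℕ} (C : Set (Fin n → F2)) : Set ((Fin n ⊕ Fin n) → F2) :=
  ⋃ a ∈ maxMot C, variety (polMotif a)

/-- The code `over-over-D-p` : the union of the varieties of `bar (pol (bar b))`
over the maximal motifs `b` of `D`. -/
def barPolBarCode {n : ℕ} (D : Set (Fin n → F2)) : Set ((Fin n ⊕ Fin n) → F2) :=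
  ⋃ b ∈ maxMot D, variety (barMotif (polMotif (barMotif b)))

/-- The formal polarization of a code `C`: the complement of `barPolBarCode` of `Cᶜ`. -/
def formalPol {n : ℕ} (C : Set (Fin n → F2)) : Set ((Fin n ⊕ Fin n) → F2) :=
  (barPolBarCode Cᶜ)ᶜ

/-- The Lagrange polynomial of a motif. -/
noncomputable def lagrange {ι : Type*} [Fintype ι] (a : Motif ι) : MvPolynomial ι F2 :=
  (∏ i ∈ Finset.univ.filter (fun i => a i = some 1), X i) *
    ∏ j ∈ Finset.univ.filter (fun j => a j = some 0), (1 - X j)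

/-- The motif (with no stars) corresponding to a word. -/
def wordMotif {ι : Type*} (w : ι → F2) : Motif ι := fun i => some (w i)

/-- The neural ideal of a code: generated by the Lagrange polynomials of the
words in the complement of the code. -/
noncomputable def neuralIdeal {ι : Type*} [Fintype ι] (C : Set (ι → F2)) :
    Ideal (MvPolynomial ι F2) :=
  Ideal.span ((fun w => lagrange (wordMotif w)) '' Cᶜ)

/-- The pseudo-monomial `∏_{i ∈ σ} X i * ∏_{j ∈ τ} (1 - X j)`. -/
noncomputable def pm {ι : Type*} (σ τ : Finset ι) : MvPolynomial ι F2 :=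
  (∏ i ∈ σ, X i) * ∏ j ∈ τ, (1 - X j)

/-- A polynomial is a pseudo-monomial if it equals `pm σ τ` for disjoint `σ τ`. -/
def IsPseudoMonomial {ι : Type*} (f : MvPolynomial ι F2) : Prop :=
  ∃ σ τ : Finset ι, Disjoint σ τ ∧ f = pm σ τ

/-- The canonical form of an ideal: the set of its minimal pseudo-monomials, i.e.
pseudo-monomials `f ∈ I` such that no pseudo-monomial `g ∈ I` of strictly smaller
degree divides `f`. -/
def CF {ι : Type*} (I : Ideal (MvPolynomial ι F2)) : Set (MvPolynomial ι F2) :=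
  {f | IsPseudoMonomial f ∧ f ∈ I ∧
    ¬ ∃ g : MvPolynomial ι F2, IsPseudoMonomial g ∧ g ∈ I ∧
      g.totalDegree < f.totalDegree ∧ g ∣ f}

/-- The polarization of the pseudo-monomial with data `(σ, τ)`:
`∏_{i ∈ σ} X i * ∏_{j ∈ τ} Y j` (here `Y j = X (Sum.inr j)`). -/
noncomputable def ppm {n : ℕ} (σ τ : Finset (Fin n)) : MvPolynomial (Fin n ⊕ Fin n) F2 :=
  (∏ i ∈ σ, X (Sum.inl i)) * ∏ j ∈ τ, X (Sum.inr j)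

/-- `g` is the polarization of the pseudo-monomial `f`. -/
def PolPM {n : ℕ} (f : MvPolynomial (Fin n) F2) (g : MvPolynomial (Fin n ⊕ Fin n) F2) : Prop :=
  ∃ σ τ : Finset (Fin n), Disjoint σ τ ∧ f = pm σ τ ∧ g = ppm σ τ

/-- The set of polarizations of the elements of a set of pseudo-monomials. -/
def polSet {n : ℕ} (S : Set (MvPolynomial (Fin n) F2)) :
    Set (MvPolynomial (Fin n ⊕ Fin n) F2) :=
  {g | ∃ f ∈ S, PolPM f g}

/-- The prime ideal of a motif: generated by `X i` for `a i = 0`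
and `1 - X j` for `a j = 1`. -/
noncomputable def pIdeal {ι : Type*} (a : Motif ι) : Ideal (MvPolynomial ι F2) :=
  Ideal.span ({f | ∃ i, a i = some 0 ∧ f = X i} ∪ {f | ∃ j, a j = some 1 ∧ f = 1 - X j})

section Aux

open Finset

variable {ι : Type*} [DecidableEq ι]

/-- The exponent finsupp of the squarefree monomial with variable set `s`. -/
noncomputable def usupp (s : Finset ι) : ι →₀ ℕ := ∑ k ∈ s, Finsupp.single k 1

lemma usupp_apply (s : Finset ι) (k : ι) : usupp s k = if k ∈ s then 1 else 0 := by
  classical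
  simp [usupp, Finsupp.finset_sum_apply, Finsupp.single_apply]

lemma usupp_inj : Function.Injective (usupp (ι := ι)) := by
  intro s t h
  ext k
  have h' := DFunLike.congr_fun h k
  simp only [usupp_apply] at h'
  constructor <;> intro hk <;> by_contra hk' <;> simp [hk, hk'] at h'

lemma usupp_le_iff {s t : Finset ι} : usupp s ≤ usupp t ↔ s ⊆ t := by
  rw [Finsupp.le_def]
  constructor
  · intro h k hk
    have h' := h k
    simp only [usupp_apply, if_pos hk] at h'
    by_contra hk'
    simp [hk'] at h'
  · intro h k
    simp only [usupp_apply]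
    by_cases hk : k ∈ s
    · simp [hk, h hk]
    · simp [hk]

lemma usupp_sum (s : Finset ι) : (usupp s).sum (fun _ e => e) = s.card := by
  classical
  induction s using Finset.induction_on with
  | empty => simp [usupp]
  | insert _ _ h ih =>
    rename_i a s
    rw [usupp, Finset.sum_insert h, Finsupp.sum_add_index' (fun _ => rfl) (fun _ _ _ => rfl),
      Finsupp.sum_single_index rfl, ← usupp, ih, Finset.card_insert_of_notMem h]
    omega

lemma monomial_usupp (s : Finset ι) :
    (monomial (usupp s) (1 : F2) : MvPolynomial ι F2) = ∏ k ∈ s, X k := by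
  classical
  induction s using Finset.induction_on with
  | empty => simp [usupp]
  | insert _ _ h ih =>
    rename_i a s
    rw [Finset.prod_insert h, ← ih, usupp, Finset.sum_insert h, ← usupp,
      show (X a : MvPolynomial ι F2) = monomial (Finsupp.single a 1) 1 from rfl,
      monomial_mul, one_mul]

lemma pm_expand (σ τ : Finset ι) (hd : Disjoint σ τ) :
    pm σ τ = ∑ S ∈ τ.powerset, (monomial (usupp (σ ∪ S)) (1 : F2) : MvPolynomial ι F2) := by
  classical
  have h1 : ∀ j : ι, (1 : MvPolynomial ι F2) - X j = X j + 1 := by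
    intro j; rw [CharTwo.sub_eq_add, add_comm]
  rw [pm]
  simp_rw [h1]
  rw [Finset.prod_add, Finset.mul_sum]
  refine Finset.sum_congr rfl fun S hS => ?_
  rw [Finset.mem_powerset] at hS
  rw [Finset.prod_const_one, mul_one, monomial_usupp,
    ← Finset.prod_union (Finset.disjoint_of_subset_right hS hd)]

lemma coeff_pm (σ τ : Finset ι) (hd : Disjoint σ τ) {S0 : Finset ι} (hS0 : S0 ⊆ τ) :
    coeff (usupp (σ ∪ S0)) (pm σ τ) = 1 := by
  classical
  have key : ∀ T : Finset ι, T ⊆ τ → (σ ∪ T) ∩ τ = T := by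
    intro T hT
    rw [Finset.union_inter_distrib_right, Finset.disjoint_iff_inter_eq_empty.mp hd,
      Finset.empty_union, Finset.inter_eq_left.mpr hT]
  rw [pm_expand σ τ hd, coeff_sum]
  rw [Finset.sum_eq_single S0]
  · simp
  · intro S hS hne
    rw [coeff_monomial, if_neg]
    intro h
    apply hne
    have h2 := usupp_inj h
    rw [Finset.mem_powerset] at hS
    calc S = (σ ∪ S) ∩ τ := (key S hS).symm
      _ = (σ ∪ S0) ∩ τ := by rw [h2]
      _ = S0 := key S0 hS0
  · intro h
    exact absurd (Finset.mem_powerset.mpr hS0) h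

lemma pm_totalDegree (σ τ : Finset ι) (hd : Disjoint σ τ) :
    (pm σ τ).totalDegree = σ.card + τ.card := by
  classical
  apply le_antisymm
  · rw [pm_expand σ τ hd]
    refine le_trans (totalDegree_finset_sum _ _) ?_
    apply Finset.sup_le
    intro S hS
    rw [Finset.mem_powerset] at hS
    rw [totalDegree_monomial _ (one_ne_zero), usupp_sum]
    calc (σ ∪ S).card ≤ σ.card + S.card := Finset.card_union_le _ _
      _ ≤ σ.card + τ.card := Nat.add_le_add_left (Finset.card_le_card hS) _
  · have hmem : usupp (σ ∪ τ) ∈ (pm σ τ).support := by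
      rw [mem_support_iff, coeff_pm σ τ hd (subset_refl τ)]
      exact one_ne_zero
    have h := le_totalDegree hmem
    rwa [usupp_sum, Finset.card_union_of_disjoint hd] at h

lemma pm_dvd_pm {σ' τ' σ τ : Finset ι} (hσ : σ' ⊆ σ) (hτ : τ' ⊆ τ) :
    (pm σ' τ' : MvPolynomial ι F2) ∣ pm σ τ := by
  classical
  refine ⟨pm (σ \ σ') (τ \ τ'), ?_⟩
  rw [pm, pm, pm, ← Finset.prod_sdiff hσ, ← Finset.prod_sdiff hτ]
  ring

lemma pm_dvd_vars {α β V : Finset ι} (_hαβ : Disjoint α β)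
    (h : (pm α β : MvPolynomial ι F2) ∣ ∏ k ∈ V, X k) : α ⊆ V := by
  classical
  intro k0 hk0
  by_contra hk0V
  obtain ⟨q, hq⟩ := h
  let φ : MvPolynomial ι F2 →ₐ[F2] MvPolynomial ι F2 :=
    aeval (fun k : ι => if k ∈ V then (X k : MvPolynomial ι F2) else 0)
  have hφX : ∀ k : ι, φ (X k) = if k ∈ V then (X k : MvPolynomial ι F2) else 0 := by
    intro k; simp [φ]
  have happ := congrArg φ hq
  rw [map_mul] at happ
  have h1 : φ (pm α β) = 0 := by
    rw [pm, map_mul, map_prod φ (fun i => (X i : MvPolynomial ι F2)) α,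
      Finset.prod_eq_zero hk0 (by rw [hφX k0]; simp [hk0V]), zero_mul]
  have h2 : φ (∏ k ∈ V, (X k : MvPolynomial ι F2)) = ∏ k ∈ V, (X k : MvPolynomial ι F2) := by
    rw [map_prod φ (fun k => (X k : MvPolynomial ι F2)) V]
    exact Finset.prod_congr rfl fun k hk => by rw [hφX k]; simp [hk]
  rw [h2, h1, zero_mul] at happ
  have hc : coeff (usupp V) (∏ k ∈ V, (X k : MvPolynomial ι F2)) = 1 := by
    rw [← monomial_usupp]; simp
  rw [happ] at hc
  simp at hc

lemma ppm_eq {n : ℕ} (σ τ : Finset (Fin n)) :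
    ppm σ τ = ∏ k ∈ (σ.image Sum.inl ∪ τ.image Sum.inr),
      (X k : MvPolynomial (Fin n ⊕ Fin n) F2) := by
  have hdisj : Disjoint (σ.image Sum.inl) (τ.image Sum.inr) := by
    simp [Finset.disjoint_left]
  rw [ppm, Finset.prod_union hdisj,
    Finset.prod_image (fun _ _ _ _ h => Sum.inl_injective h),
    Finset.prod_image (fun _ _ _ _ h => Sum.inr_injective h)]

end Aux

/-- `CF((J_C)ᵖ) = {fᵖ : f ∈ CF(J_C)}`, where `(J_C)ᵖ` is the ideal
generated by the polarizations of the elements of `CF(J_C)`. -/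
theorem CF_polarized_neuralIdeal {n : ℕ} (C : Set (Fin n → F2)) :
    CF (Ideal.span (polSet (CF (neuralIdeal C)))) = polSet (CF (neuralIdeal C)) := by
  classical
  set S := CF (neuralIdeal C) with hSdef
  set T : Set ((Fin n ⊕ Fin n) →₀ ℕ) := {t | monomial t (1 : F2) ∈ polSet S} with hTdef
  have hps : polSet S = (fun t => monomial t (1 : F2)) '' T := by
    ext g
    constructor
    · rintro ⟨f, hf, σ, τ, hdisj, hfeq, rfl⟩
      refine ⟨usupp (σ.image Sum.inl ∪ τ.image Sum.inr), ?_, ?_⟩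
      · show monomial _ (1 : F2) ∈ polSet S
        rw [monomial_usupp, ← ppm_eq]
        exact ⟨f, hf, σ, τ, hdisj, hfeq, rfl⟩
      · show (monomial (usupp (σ.image Sum.inl ∪ τ.image Sum.inr)) (1 : F2)) = ppm σ τ
        rw [monomial_usupp, ← ppm_eq]
    · rintro ⟨t, ht, rfl⟩
      exact ht
  have hmem : ∀ x : MvPolynomial (Fin n ⊕ Fin n) F2,
      x ∈ Ideal.span (polSet S) ↔ ∀ xi ∈ x.support, ∃ t ∈ T, t ≤ xi := by
    intro x
    rw [hps]
    exact mem_ideal_span_monomial_image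
  have hTdata : ∀ t ∈ T, ∃ f ∈ S, ∃ σ' τ' : Finset (Fin n), Disjoint σ' τ' ∧ f = pm σ' τ' ∧
      t = usupp (σ'.image Sum.inl ∪ τ'.image Sum.inr) := by
    rintro t ⟨f, hf, σ', τ', hdisj, hfeq, hmon⟩
    refine ⟨f, hf, σ', τ', hdisj, hfeq, ?_⟩
    rw [ppm_eq, ← monomial_usupp] at hmon
    exact monomial_left_injective one_ne_zero hmon
  have hVcard : ∀ σ τ : Finset (Fin n),
      (σ.image Sum.inl ∪ τ.image Sum.inr).card = σ.card + τ.card := by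
    intro σ τ
    rw [Finset.card_union_of_disjoint (by simp [Finset.disjoint_left]),
      Finset.card_image_of_injective _ Sum.inl_injective,
      Finset.card_image_of_injective _ Sum.inr_injective]
  ext g
  constructor
  · -- CF ⊆ polSet
    rintro ⟨⟨σt, τt, hdisj, rfl⟩, hgI, hmin⟩
    have hsupp : usupp σt ∈ (pm σt τt).support := by
      rw [mem_support_iff]
      have h := coeff_pm σt τt hdisj (Finset.empty_subset _)
      rw [Finset.union_empty] at h
      rw [h]; exact one_ne_zero
    obtain ⟨t, htT, htle⟩ := (hmem _).mp hgI _ hsupp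
    obtain ⟨f', hf'S, σ', τ', hd', hf'eq, rfl⟩ := hTdata t htT
    have hV'σ : (σ'.image Sum.inl ∪ τ'.image Sum.inr) ⊆ σt := usupp_le_iff.mp htle
    have hppm' : pm (σ'.image Sum.inl ∪ τ'.image Sum.inr) (∅ : Finset (Fin n ⊕ Fin n))
        = ppm σ' τ' := by
      rw [ppm_eq, pm, Finset.prod_empty, mul_one]
    have hpdvd : pm (σ'.image Sum.inl ∪ τ'.image Sum.inr) (∅ : Finset (Fin n ⊕ Fin n))
        ∣ pm σt τt := pm_dvd_pm hV'σ (Finset.empty_subset _)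
    have hpI : pm (σ'.image Sum.inl ∪ τ'.image Sum.inr) (∅ : Finset (Fin n ⊕ Fin n))
        ∈ Ideal.span (polSet S) := by
      apply Ideal.subset_span
      rw [hppm']
      exact ⟨f', hf'S, σ', τ', hd', hf'eq, rfl⟩
    have hnlt : ¬ (pm (σ'.image Sum.inl ∪ τ'.image Sum.inr)
        (∅ : Finset (Fin n ⊕ Fin n))).totalDegree < (pm σt τt).totalDegree := fun hlt =>
      hmin ⟨_, ⟨_, ∅, Finset.disjoint_empty_right _, rfl⟩, hpI, hlt, hpdvd⟩
    rw [pm_totalDegree _ _ hdisj, pm_totalDegree _ _ (Finset.disjoint_empty_right _),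
      Finset.card_empty] at hnlt
    have hV'le := Finset.card_le_card hV'σ
    have hτ0 : τt = ∅ := by
      rw [← Finset.card_eq_zero]
      omega
    have hV'eq : (σ'.image Sum.inl ∪ τ'.image Sum.inr) = σt :=
      Finset.eq_of_subset_of_card_le hV'σ (by omega)
    refine ⟨f', hf'S, σ', τ', hd', hf'eq, ?_⟩
    rw [hτ0, pm, Finset.prod_empty, mul_one, ppm_eq, hV'eq]
  · -- polSet ⊆ CF
    rintro ⟨f, hfS, σ, τ, hdisj, hfeq, rfl⟩
    have hVd : Disjoint (σ.image Sum.inl) (τ.image Sum.inr) := by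
      simp [Finset.disjoint_left]
    have hppm : ppm σ τ = pm (σ.image Sum.inl ∪ τ.image Sum.inr)
        (∅ : Finset (Fin n ⊕ Fin n)) := by
      rw [pm, Finset.prod_empty, mul_one, ppm_eq]
    refine ⟨⟨_, ∅, Finset.disjoint_empty_right _, hppm⟩,
      Ideal.subset_span ⟨f, hfS, σ, τ, hdisj, hfeq, rfl⟩, ?_⟩
    rintro ⟨h, ⟨α, β, hαβ, rfl⟩, hhI, hdeg, hdvd⟩
    have hgdeg : (ppm σ τ).totalDegree = σ.card + τ.card := by
      rw [hppm, pm_totalDegree _ _ (Finset.disjoint_empty_right _), Finset.card_empty,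
        add_zero, hVcard]
    have hαV : α ⊆ σ.image Sum.inl ∪ τ.image Sum.inr := by
      apply pm_dvd_vars hαβ
      rwa [ppm_eq] at hdvd
    have hαsupp : usupp α ∈ (pm α β).support := by
      rw [mem_support_iff]
      have h := coeff_pm α β hαβ (Finset.empty_subset _)
      rw [Finset.union_empty] at h
      rw [h]; exact one_ne_zero
    obtain ⟨t, htT, htle⟩ := (hmem _).mp hhI _ hαsupp
    obtain ⟨f', hf'S, σ', τ', hd', hf'eq, rfl⟩ := hTdata t htT
    have hV'α : (σ'.image Sum.inl ∪ τ'.image Sum.inr) ⊆ α := usupp_le_iff.mp htle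
    have hV'V : (σ'.image Sum.inl ∪ τ'.image Sum.inr) ⊆ σ.image Sum.inl ∪ τ.image Sum.inr :=
      hV'α.trans hαV
    have hσ' : σ' ⊆ σ := by
      intro i hi
      have hmem' : Sum.inl i ∈ σ.image Sum.inl ∪ τ.image Sum.inr :=
        hV'V (Finset.mem_union_left _ (Finset.mem_image_of_mem _ hi))
      simpa using hmem'
    have hτ' : τ' ⊆ τ := by
      intro i hi
      have hmem' : Sum.inr i ∈ σ.image Sum.inl ∪ τ.image Sum.inr :=
        hV'V (Finset.mem_union_right _ (Finset.mem_image_of_mem _ hi))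
      simpa using hmem'
    obtain ⟨hfPM, hfJ, hfmin⟩ := hfS
    obtain ⟨hf'PM, hf'J, -⟩ := hf'S
    have hdvdf : f' ∣ f := by
      rw [hfeq, hf'eq]
      exact pm_dvd_pm hσ' hτ'
    have hnlt : ¬ f'.totalDegree < f.totalDegree := fun hlt =>
      hfmin ⟨f', hf'PM, hf'J, hlt, hdvdf⟩
    rw [hfeq, hf'eq, pm_totalDegree _ _ hdisj, pm_totalDegree _ _ hd'] at hnlt
    have hc1 := Finset.card_le_card hσ'
    have hc2 := Finset.card_le_card hτ'
    have hσeq : σ' = σ := Finset.eq_of_subset_of_card_le hσ' (by omega)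
    have hτeq : τ' = τ := Finset.eq_of_subset_of_card_le hτ' (by omega)
    have hαeq : α = σ.image Sum.inl ∪ τ.image Sum.inr := by
      apply Finset.Subset.antisymm hαV
      rw [← hσeq, ← hτeq]
      exact hV'α
    have hhge := le_totalDegree hαsupp
    rw [usupp_sum] at hhge
    have hcard : α.card = σ.card + τ.card := by rw [hαeq, hVcard]
    rw [hgdeg] at hdeg
    omega
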